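/- arXiv:1710.06049 — 4 statements merged into one kernel-verified Lean document; each statement's English description precedes it below -/
import Mathlib

section
/- (Walsh's formula) For natural numbers m and λ, the number s(m,λ) of doubly surjective functions from Fin m to Fin λ satisfies s(m,λ) = ∑_{j=0}^{λ} (-1)^j · C(λ,j) · ∑_{i=0}^{j} C(j,i) · (m!/(m-i)!) · (λ-j)^{m-i}, where the inner terms with i > m are taken to be zero. -/
open Finset

/-- The set of "matching" positions of `f`: positions `i` such that some other
position `j ≠ i` has the same color, `f j = f i`. -/
def matchingSet {k n : ℕ} (f : Fin k → Fin n) : Finset (Fin k) :=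
  Finset.univ.filter (fun i => ∃ j, j ≠ i ∧ f j = f i)

/-- The set of "repeat" positions of `f`: positions `i` such that some earlier
position `j < i` has the same color, `f j = f i`. -/
def repeatSet {k n : ℕ} (f : Fin k → Fin n) : Finset (Fin k) :=
  Finset.univ.filter (fun i => ∃ j, j < i ∧ f j = f i)

/-- The set of "repeated" colors of `f`: colors used by at least two positions. -/
def repeatedColors {k n : ℕ} (f : Fin k → Fin n) : Finset (Fin n) :=
  Finset.univ.filter (fun c => 2 ≤ (Finset.univ.filter (fun i => f i = c)).card)

/-- `Z k n m l` is the number of sequences of `k` balls colored with at most `n`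
colors having exactly `m` matching positions and exactly `l` repeated colors. -/
def Z (k n m l : ℕ) : ℕ :=
  Fintype.card {f : Fin k → Fin n // (matchingSet f).card = m ∧ (repeatedColors f).card = l}

/-- `dsurj m l` is the number of doubly surjective functions `Fin m → Fin l`,
i.e. functions for which every element of `Fin l` has at least two preimages. -/
def dsurj (m l : ℕ) : ℕ :=
  Fintype.card {g : Fin m → Fin l // ∀ c : Fin l, 2 ≤ (Finset.univ.filter (fun i => g i = c)).card}

def walshEquiv (m l : ℕ) (S : Finset (Fin l)) (T : Finset (Fin m)) :
    {f : Fin m → Fin l // (∀ c ∈ S, (univ.filter (fun i => f i = c)).card ≤ 1) ∧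
        univ.filter (fun i => f i ∈ S) = T} ≃ ((↥T ↪ ↥S) × (↥(Tᶜ) → ↥(Sᶜ))) where
  toFun x :=
    have hT : ∀ i : Fin m, i ∈ T → x.1 i ∈ S := fun i hi => by
      rw [← x.2.2] at hi; exact (mem_filter.mp hi).2
    have hTc : ∀ i : Fin m, i ∉ T → x.1 i ∉ S := fun i hi hS =>
      hi (x.2.2 ▸ mem_filter.mpr ⟨mem_univ i, hS⟩)
    (⟨fun i => ⟨x.1 i.1, hT i.1 i.2⟩, by
      rintro ⟨i, hi⟩ ⟨i', hi'⟩ h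
      simp only [Subtype.mk.injEq] at h
      have hc : x.1 i' ∈ S := hT i' hi'
      have h1 := x.2.1 (x.1 i') hc
      have hmem : i ∈ univ.filter (fun j => x.1 j = x.1 i') := mem_filter.mpr ⟨mem_univ _, h⟩
      have hmem' : i' ∈ univ.filter (fun j => x.1 j = x.1 i') := mem_filter.mpr ⟨mem_univ _, rfl⟩
      exact Subtype.ext (Finset.card_le_one.mp h1 _ hmem _ hmem')⟩,
     fun i => ⟨x.1 i.1, mem_compl.mpr (hTc i.1 (mem_compl.mp i.2))⟩)
  invFun p := ⟨fun i => if hi : i ∈ T then (p.1 ⟨i, hi⟩ : Fin l)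
      else (p.2 ⟨i, mem_compl.mpr hi⟩ : Fin l), by
    constructor
    · intro c hc
      rw [Finset.card_le_one]
      intro a ha b hb
      simp only [mem_filter, mem_univ, true_and] at ha hb
      by_cases haT : a ∈ T
      · by_cases hbT : b ∈ T
        · rw [dif_pos haT] at ha; rw [dif_pos hbT] at hb
          have : p.1 ⟨a, haT⟩ = p.1 ⟨b, hbT⟩ := Subtype.ext (ha.trans hb.symm)
          exact congrArg Subtype.val (p.1.injective this)
        · rw [dif_neg hbT] at hb
          exact absurd (hb ▸ (p.2 ⟨b, mem_compl.mpr hbT⟩).2) (by simp [hc])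
      · rw [dif_neg haT] at ha
        exact absurd (ha ▸ (p.2 ⟨a, mem_compl.mpr haT⟩).2) (by simp [hc])
    · ext i
      simp only [mem_filter, mem_univ, true_and]
      by_cases hi : i ∈ T
      · rw [dif_pos hi]
        exact ⟨fun _ => hi, fun _ => (p.1 ⟨i, hi⟩).2⟩
      · rw [dif_neg hi]
        have := (p.2 ⟨i, mem_compl.mpr hi⟩).2
        simp only [mem_compl] at this
        exact ⟨fun h => absurd h this, fun h => absurd h hi⟩⟩
  left_inv x := by
    apply Subtype.ext
    funext i
    by_cases hi : i ∈ T
    · simp [dif_pos hi]; rfl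
    · simp [dif_neg hi]
  right_inv p := by
    refine Prod.ext ?_ ?_
    · apply DFunLike.ext
      rintro ⟨i, hi⟩
      exact Subtype.ext (by simp [dif_pos hi])
    · funext i
      exact Subtype.ext (by simp [dif_neg (mem_compl.mp i.2)])

lemma walsh_fiber_card (m l : ℕ) (S : Finset (Fin l)) (T : Finset (Fin m)) :
    (univ.filter (fun f : Fin m → Fin l =>
        (∀ c ∈ S, (univ.filter (fun i => f i = c)).card ≤ 1) ∧
        univ.filter (fun i => f i ∈ S) = T)).card
      = S.card.descFactorial T.card * (l - S.card) ^ (m - T.card) := by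
  rw [← Fintype.card_subtype, Fintype.card_congr (walshEquiv m l S T), Fintype.card_prod,
    Fintype.card_embedding_eq, Fintype.card_fun]
  simp [Fintype.card_coe, Finset.card_compl]

lemma walsh_countB (m l : ℕ) (S : Finset (Fin l)) :
    (univ.filter (fun f : Fin m → Fin l =>
        ∀ c ∈ S, (univ.filter (fun i => f i = c)).card ≤ 1)).card
    = ∑ i ∈ range (m + 1), m.choose i * (S.card.descFactorial i * (l - S.card) ^ (m - i)) := by
  rw [Finset.card_eq_sum_card_fiberwise
      (f := fun f : Fin m → Fin l => univ.filter (fun i => f i ∈ S))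
      (t := univ) (fun x _ => mem_univ _)]
  have step : ∀ T : Finset (Fin m),
      (Finset.filter (fun f : Fin m → Fin l => univ.filter (fun i => f i ∈ S) = T)
        (univ.filter (fun f : Fin m → Fin l =>
          ∀ c ∈ S, (univ.filter (fun i => f i = c)).card ≤ 1))).card
      = S.card.descFactorial T.card * (l - S.card) ^ (m - T.card) := by
    intro T
    rw [Finset.filter_filter]
    exact walsh_fiber_card m l S T
  rw [Finset.sum_congr rfl fun T _ => step T, ← Finset.powerset_univ, Finset.sum_powerset]
  rw [Finset.card_univ, Fintype.card_fin]
  refine Finset.sum_congr rfl fun j hj => ?_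
  have : ∀ T ∈ Finset.powersetCard j (univ : Finset (Fin m)),
      S.card.descFactorial T.card * (l - S.card) ^ (m - T.card)
        = S.card.descFactorial j * (l - S.card) ^ (m - j) := by
    intro T hT
    rw [(Finset.mem_powersetCard.mp hT).2]
  rw [Finset.sum_congr rfl this, Finset.sum_const, Finset.card_powersetCard, Finset.card_univ,
    Fintype.card_fin, smul_eq_mul]

def dsurjX (m l : ℕ) : ℕ :=
  Fintype.card {g : Fin m → Fin l // ∀ c : Fin l, 2 ≤ (Finset.univ.filter (fun i => g i = c)).card}

lemma walsh_ie (m l : ℕ) :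
    (dsurjX m l : ℤ) = ∑ S : Finset (Fin l), (-1 : ℤ) ^ S.card *
      ((univ.filter (fun f : Fin m → Fin l =>
        ∀ c ∈ S, (univ.filter (fun i => f i = c)).card ≤ 1)).card : ℤ) := by
  have h1 : dsurjX m l = (univ.filter (fun f : Fin m → Fin l =>
      ∀ c : Fin l, 2 ≤ (univ.filter (fun i => f i = c)).card)).card := by
    rw [dsurjX, Fintype.card_subtype]
  rw [h1, Finset.card_filter]
  push_cast
  have key : ∀ f : Fin m → Fin l,
      (if (∀ c : Fin l, 2 ≤ (univ.filter (fun i => f i = c)).card) then (1 : ℤ) else 0)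
      = ∑ S : Finset (Fin l),
          (if (∀ c ∈ S, (univ.filter (fun i => f i = c)).card ≤ 1)
            then (-1 : ℤ) ^ S.card else 0) := by
    intro f
    have h2 : (∀ c : Fin l, 2 ≤ (univ.filter (fun i => f i = c)).card) ↔
        (univ.filter (fun c : Fin l => (univ.filter (fun i => f i = c)).card ≤ 1)) = ∅ := by
      rw [Finset.filter_eq_empty_iff]
      constructor
      · exact fun h c _ => Nat.not_le.mpr (h c)
      · exact fun h c => Nat.not_le.mp (h (mem_univ c))
    have h3 : (univ.filter (fun S : Finset (Fin l) =>
        ∀ c ∈ S, (univ.filter (fun i => f i = c)).card ≤ 1))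
        = (univ.filter (fun c : Fin l => (univ.filter (fun i => f i = c)).card ≤ 1)).powerset := by
      ext S
      simp [Finset.mem_powerset, Finset.subset_iff]
    rw [← Finset.sum_filter, h3, Finset.sum_powerset_neg_one_pow_card]
    by_cases h : (∀ c : Fin l, 2 ≤ (univ.filter (fun i => f i = c)).card)
    · rw [if_pos h, if_pos (h2.mp h)]
    · rw [if_neg h, if_neg (fun he => h (h2.mpr he))]
  rw [Finset.sum_congr rfl fun f _ => key f, Finset.sum_comm]
  refine Finset.sum_congr rfl fun S _ => ?_
  rw [Finset.card_filter]
  push_cast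
  rw [Finset.mul_sum]
  refine Finset.sum_congr rfl fun f _ => ?_
  by_cases h : (∀ c ∈ S, (univ.filter (fun i => f i = c)).card ≤ 1)
  · rw [if_pos h, if_pos h, mul_one]
  · rw [if_neg h, if_neg h, mul_zero]

lemma walsh_sumswap (m j x : ℕ) :
    ∑ i ∈ range (m + 1), m.choose i * (j.descFactorial i * x ^ (m - i))
    = ∑ i ∈ range (j + 1), j.choose i * (m.descFactorial i * x ^ (m - i)) := by
  have hterm : ∀ i, m.choose i * (j.descFactorial i * x ^ (m - i))
      = j.choose i * (m.descFactorial i * x ^ (m - i)) := by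
    intro i
    rw [Nat.descFactorial_eq_factorial_mul_choose, Nat.descFactorial_eq_factorial_mul_choose]
    ring
  rw [Finset.sum_congr rfl fun i _ => hterm i]
  have h1 : ∑ i ∈ range (max m j + 1), j.choose i * (m.descFactorial i * x ^ (m - i))
      = ∑ i ∈ range (m + 1), j.choose i * (m.descFactorial i * x ^ (m - i)) := by
    refine (Finset.sum_subset (Finset.range_subset_range.mpr (by omega)) ?_).symm
    intro i _ hi
    simp only [Finset.mem_range] at hi
    rw [Nat.descFactorial_eq_zero_iff_lt.mpr (by omega)]
    ring
  have h2 : ∑ i ∈ range (max m j + 1), j.choose i * (m.descFactorial i * x ^ (m - i))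
      = ∑ i ∈ range (j + 1), j.choose i * (m.descFactorial i * x ^ (m - i)) := by
    refine (Finset.sum_subset (Finset.range_subset_range.mpr (by omega)) ?_).symm
    intro i _ hi
    simp only [Finset.mem_range] at hi
    rw [Nat.choose_eq_zero_of_lt (by omega)]
    ring
  rw [← h1, h2]

lemma walsh_inner (m j x : ℕ) :
    ((∑ i ∈ range (j + 1), j.choose i * (m.descFactorial i * x ^ (m - i)) : ℕ) : ℤ)
    = ∑ i ∈ range (j + 1),
        (if i ≤ m then
          (Nat.choose j i : ℤ) * ((Nat.factorial m / Nat.factorial (m - i) : ℕ) : ℤ) *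
            ((x : ℤ)) ^ (m - i)
        else 0) := by
  rw [Nat.cast_sum]
  refine Finset.sum_congr rfl fun i _ => ?_
  by_cases h : i ≤ m
  · rw [if_pos h, ← Nat.descFactorial_eq_div h]
    push_cast
    ring
  · rw [if_neg h, Nat.descFactorial_eq_zero_iff_lt.mpr (by omega)]
    push_cast
    ring

theorem stmt6' (m l : ℕ) :
    (dsurjX m l : ℤ) =
      ∑ j ∈ Finset.range (l + 1), (-1 : ℤ) ^ j * (Nat.choose l j : ℤ) *
        ∑ i ∈ Finset.range (j + 1),
          (if i ≤ m then
            (Nat.choose j i : ℤ) * ((Nat.factorial m / Nat.factorial (m - i) : ℕ) : ℤ) *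
              (((l - j : ℕ) : ℤ)) ^ (m - i)
          else 0) := by
  have h0 : (dsurjX m l : ℤ) = ∑ S : Finset (Fin l), (-1 : ℤ) ^ S.card *
      ((∑ i ∈ range (m + 1),
        m.choose i * (S.card.descFactorial i * (l - S.card) ^ (m - i)) : ℕ) : ℤ) := by
    rw [walsh_ie]
    refine Finset.sum_congr rfl fun S _ => ?_
    rw [walsh_countB]
  rw [h0, ← Finset.powerset_univ, Finset.sum_powerset, Finset.card_univ, Fintype.card_fin]
  refine Finset.sum_congr rfl fun j hj => ?_
  have hS : ∀ S ∈ Finset.powersetCard j (univ : Finset (Fin l)),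
      (-1 : ℤ) ^ S.card * ((∑ i ∈ range (m + 1),
          m.choose i * (S.card.descFactorial i * (l - S.card) ^ (m - i)) : ℕ) : ℤ)
      = (-1 : ℤ) ^ j * ((∑ i ∈ range (m + 1),
          m.choose i * (j.descFactorial i * (l - j) ^ (m - i)) : ℕ) : ℤ) := by
    intro S hS
    rw [(Finset.mem_powersetCard.mp hS).2]
  rw [Finset.sum_congr rfl hS, Finset.sum_const, Finset.card_powersetCard, Finset.card_univ,
    Fintype.card_fin, nsmul_eq_mul, walsh_sumswap, walsh_inner]
  ring


/-- Walsh's formula: the number of doubly surjective functions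
`Fin m → Fin l` equals
`∑_{j=0}^{l} (-1)^j C(l,j) ∑_{i=0}^{j} C(j,i) (m!/(m-i)!) (l-j)^{m-i}`,
where the inner terms with `i > m` are taken to be zero. -/
theorem stmt6 (m l : ℕ) :
    (dsurj m l : ℤ) =
      ∑ j ∈ Finset.range (l + 1), (-1 : ℤ) ^ j * (Nat.choose l j : ℤ) *
        ∑ i ∈ Finset.range (j + 1),
          (if i ≤ m then
            (Nat.choose j i : ℤ) * ((Nat.factorial m / Nat.factorial (m - i) : ℕ) : ℤ) *
              (((l - j : ℕ) : ℤ)) ^ (m - i)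
          else 0) := by
  exact stmt6' m l
end

section
/- Let k, n, m, λ be natural numbers with m ≥ k - n + 1, λ ≤ ⌊m/2⌋, and λ ≤ n - k + m (in particular k ≤ n + m - λ so that n - λ + m - k ≥ 0). Then Z(k,n,m,λ) = C(n,λ) · C(k,m) · ((n-λ)!/((n-λ+m-k)!)) · s(m,λ). -/
open Finset

section Aux

variable {k n : ℕ}

lemma mem_matchingSet_iff (f : Fin k → Fin n) (i : Fin k) :
    i ∈ matchingSet f ↔ f i ∈ repeatedColors f := by
  simp only [matchingSet, repeatedColors, mem_filter, mem_univ, true_and]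
  constructor
  · rintro ⟨j, hj, hfj⟩
    exact Finset.one_lt_card_iff.mpr ⟨j, i, by simp [hfj], by simp, hj⟩
  · intro h
    obtain ⟨a, b, ha, hb, hab⟩ := Finset.one_lt_card_iff.mp h
    simp only [mem_filter, mem_univ, true_and] at ha hb
    by_cases hai : a = i
    · exact ⟨b, by rw [hai] at hab; exact fun h => hab h.symm, hb⟩
    · exact ⟨a, hai, ha⟩

lemma mem_repeatedColors_iff (f : Fin k → Fin n) (c : Fin n) :
    c ∈ repeatedColors f ↔ 2 ≤ (Finset.univ.filter (fun i => f i = c)).card := by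
  simp [repeatedColors]

end Aux

section Main

variable {k n : ℕ}

/-- The reconstruction map. -/
def recf (M : Finset (Fin k)) (L : Finset (Fin n)) (g : ↥M → ↥L) (h : ↥Mᶜ ↪ ↥Lᶜ) :
    Fin k → Fin n :=
  fun i => if hi : i ∈ M then (g ⟨i, hi⟩ : Fin n) else (h ⟨i, by simpa using hi⟩ : Fin n)

lemma recf_mem (M : Finset (Fin k)) (L : Finset (Fin n)) (g : ↥M → ↥L) (h : ↥Mᶜ ↪ ↥Lᶜ)
    (i : Fin k) (hi : i ∈ M) : recf M L g h i = g ⟨i, hi⟩ := by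
  simp [recf, hi]

lemma recf_mem_compl (M : Finset (Fin k)) (L : Finset (Fin n)) (g : ↥M → ↥L) (h : ↥Mᶜ ↪ ↥Lᶜ)
    (i : Fin k) (hi : i ∉ M) : recf M L g h i = h ⟨i, by simpa using hi⟩ := by
  simp [recf, hi]

lemma recf_repeatedColors (M : Finset (Fin k)) (L : Finset (Fin n)) (g : ↥M → ↥L)
    (hg : ∀ c : ↥L, 2 ≤ (Finset.univ.filter (fun i => g i = c)).card) (h : ↥Mᶜ ↪ ↥Lᶜ) :
    repeatedColors (recf M L g h) = L := by
  ext c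
  rw [mem_repeatedColors_iff]
  by_cases hc : c ∈ L
  · simp only [hc, iff_true]
    refine le_trans (hg ⟨c, hc⟩) ?_
    refine Finset.card_le_card_of_injOn (fun i => (i : Fin k)) ?_ ?_
    · intro a ha
      simp only [Finset.mem_coe, mem_filter, mem_univ, true_and] at ha ⊢
      rw [recf_mem M L g h a a.2, ha]
    · intro a _ b _ hab
      exact Subtype.ext hab
  · simp only [hc, iff_false, not_le]
    have : (Finset.univ.filter (fun i => recf M L g h i = c)).card ≤ 1 := by
      apply Finset.card_le_one.mpr
      intro a ha b hb
      simp only [mem_filter, mem_univ, true_and] at ha hb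
      have haM : a ∉ M := by
        intro hm
        rw [recf_mem M L g h a hm] at ha
        exact hc (ha ▸ (g ⟨a, hm⟩).2)
      have hbM : b ∉ M := by
        intro hm
        rw [recf_mem M L g h b hm] at hb
        exact hc (hb ▸ (g ⟨b, hm⟩).2)
      rw [recf_mem_compl M L g h a haM] at ha
      rw [recf_mem_compl M L g h b hbM] at hb
      have h2 : h ⟨a, by simpa using haM⟩ = h ⟨b, by simpa using hbM⟩ :=
        Subtype.ext (ha.trans hb.symm)
      exact congrArg Subtype.val (h.injective h2)
    omega

lemma recf_matchingSet (M : Finset (Fin k)) (L : Finset (Fin n)) (g : ↥M → ↥L)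
    (hg : ∀ c : ↥L, 2 ≤ (Finset.univ.filter (fun i => g i = c)).card) (h : ↥Mᶜ ↪ ↥Lᶜ) :
    matchingSet (recf M L g h) = M := by
  ext i
  rw [mem_matchingSet_iff, recf_repeatedColors M L g hg h]
  constructor
  · intro hfi
    by_contra hi
    rw [recf_mem_compl M L g h i hi] at hfi
    have := (h ⟨i, by simpa using hi⟩).2
    rw [Finset.mem_compl] at this
    exact this hfi
  · intro hi
    rw [recf_mem M L g h i hi]
    exact (g ⟨i, hi⟩).2

section Forward

variable {M : Finset (Fin k)} {L : Finset (Fin n)} {f : Fin k → Fin n}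
variable (hM : matchingSet f = M) (hL : repeatedColors f = L)

include hM hL in
lemma fwd_mem {i : Fin k} (hi : i ∈ M) : f i ∈ L := by
  rw [← hL]; rw [← hM] at hi; exact (mem_matchingSet_iff f i).mp hi

include hM hL in
lemma fwd_mem_compl {i : Fin k} (hi : i ∉ M) : f i ∉ L := by
  rw [← hL]; rw [← hM] at hi
  exact fun hc => hi ((mem_matchingSet_iff f i).mpr hc)

include hM hL in
lemma fwd_fiber (c : Fin n) (hc : c ∈ L) :
    2 ≤ (Finset.univ.filter (fun i : ↥M => f i = c)).card := by
  have h2 : 2 ≤ (Finset.univ.filter (fun i : Fin k => f i = c)).card := by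
    rw [← mem_repeatedColors_iff, hL]; exact hc
  refine le_trans h2 (le_of_eq (Finset.card_bij (fun i hi => (⟨i, ?_⟩ : ↥M)) ?_ ?_ ?_))
  · simp only [mem_filter, mem_univ, true_and] at hi
    rw [← hM, mem_matchingSet_iff, hL, hi]; exact hc
  · intro a ha
    simpa using (Finset.mem_filter.mp ha).2
  · intro a _ b _ hab
    exact congrArg Subtype.val hab
  · intro b hb
    refine ⟨b, ?_, rfl⟩
    simpa using (Finset.mem_filter.mp hb).2

include hM hL in
lemma fwd_inj {i j : Fin k} (hi : i ∉ M) (hj : j ∉ M) (hij : f i = f j) : i = j := by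
  by_contra hne
  have : f i ∈ repeatedColors f := by
    rw [mem_repeatedColors_iff]
    exact Finset.one_lt_card_iff.mpr ⟨i, j, by simp, by simp [hij], hne⟩
  exact fwd_mem_compl hM hL hi (hL ▸ this)

end Forward

/-- The central equivalence. -/
def eqv (M : Finset (Fin k)) (L : Finset (Fin n)) :
    {f : Fin k → Fin n // matchingSet f = M ∧ repeatedColors f = L} ≃
      {g : ↥M → ↥L // ∀ c : ↥L, 2 ≤ (Finset.univ.filter (fun i => g i = c)).card} ×
        (↥Mᶜ ↪ ↥Lᶜ) where
  toFun F :=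
    (⟨fun i => ⟨F.1 i, fwd_mem F.2.1 F.2.2 i.2⟩, by
        intro c
        refine le_trans (fwd_fiber F.2.1 F.2.2 c c.2) (le_of_eq ?_)
        congr 1
        ext i
        simp [Subtype.ext_iff]⟩,
     ⟨fun i => ⟨F.1 i, Finset.mem_compl.mpr
          (fwd_mem_compl F.2.1 F.2.2 (Finset.mem_compl.mp i.2))⟩, by
        intro a b hab
        exact Subtype.ext (fwd_inj F.2.1 F.2.2 (Finset.mem_compl.mp a.2)
          (Finset.mem_compl.mp b.2) (congrArg Subtype.val hab))⟩)
  invFun P := ⟨recf M L P.1.1 P.2,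
    recf_matchingSet M L P.1.1 P.1.2 P.2, recf_repeatedColors M L P.1.1 P.1.2 P.2⟩
  left_inv F := by
    apply Subtype.ext
    funext i
    by_cases hi : i ∈ M <;> simp [recf, hi] <;> rfl
  right_inv P := by
    refine Prod.ext ?_ ?_
    · apply Subtype.ext
      funext i
      apply Subtype.ext
      simp [recf, i.2]
    · apply DFunLike.ext
      intro i
      apply Subtype.ext
      have hi : (i : Fin k) ∉ M := Finset.mem_compl.mp i.2
      simp [recf, hi]

lemma card_dsurj_subtype (α β : Type) [Fintype α] [DecidableEq α] [Fintype β] [DecidableEq β] :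
    Fintype.card {g : α → β // ∀ c : β, 2 ≤ (Finset.univ.filter (fun i => g i = c)).card} =
      dsurj (Fintype.card α) (Fintype.card β) := by
  let e := Fintype.equivFin α
  let e' := Fintype.equivFin β
  have key : ∀ (g : α → β) (c' : Fin (Fintype.card β)),
      (Finset.univ.filter (fun i => (Equiv.arrowCongr e e' g) i = c')).card =
        (Finset.univ.filter (fun a => g a = e'.symm c')).card := by
    intro g c'
    refine Finset.card_bij (fun i _ => e.symm i) ?_ ?_ ?_
    · intro a ha
      simp only [Equiv.arrowCongr_apply, Function.comp_apply, mem_filter, mem_univ,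
        true_and] at ha ⊢
      rw [← ha, Equiv.symm_apply_apply]
    · intro a _ b _ hab
      exact e.symm.injective hab
    · intro b hb
      simp only [mem_filter, mem_univ, true_and] at hb
      exact ⟨e b, by simp [hb], by simp⟩
  rw [dsurj]
  apply Fintype.card_congr
  refine Equiv.subtypeEquiv (Equiv.arrowCongr e e') (fun g => ?_)
  constructor
  · intro hg c'
    rw [key g c']
    exact hg _
  · intro hg c
    have := hg (e' c)
    rw [key g (e' c)] at this
    simpa using this

lemma card_ML (M : Finset (Fin k)) (L : Finset (Fin n)) :
    (Finset.univ.filter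
        (fun f : Fin k → Fin n => matchingSet f = M ∧ repeatedColors f = L)).card =
      dsurj M.card L.card * (n - L.card).descFactorial (k - M.card) := by
  rw [← Fintype.card_subtype, Fintype.card_congr (eqv M L), Fintype.card_prod]
  congr 1
  · rw [card_dsurj_subtype, Fintype.card_coe, Fintype.card_coe]
  · rw [Fintype.card_embedding_eq, Fintype.card_coe, Fintype.card_coe,
      Finset.card_compl, Finset.card_compl, Fintype.card_fin, Fintype.card_fin]

end Main

/-- for `m ≥ k - n + 1`, `l ≤ ⌊m/2⌋` and `l + k ≤ n + m`
(i.e. `l ≤ n - k + m`, so that `n - l + m - k ≥ 0`),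
`Z k n m l = C(n,l) · C(k,m) · ((n-l)! / (n-l+m-k)!) · s(m,l)`. -/
theorem stmt8 (k n m l : ℕ) (h1 : k - n + 1 ≤ m) (h2 : l ≤ m / 2) (h3 : l + k ≤ n + m) :
    Z k n m l =
      Nat.choose n l * Nat.choose k m *
        (Nat.factorial (n - l) / Nat.factorial (n - l + m - k)) * dsurj m l := by
  have Zeq : Z k n m l =
      Nat.choose n l * Nat.choose k m * (n - l).descFactorial (k - m) * dsurj m l := by
    rw [Z, Fintype.card_subtype]
    rw [Finset.card_eq_sum_card_fiberwise
      (f := fun f : Fin k → Fin n => (matchingSet f, repeatedColors f))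
      (t := Finset.powersetCard m Finset.univ ×ˢ Finset.powersetCard l Finset.univ)
      (by
        intro f hf
        simp only [Finset.mem_coe, mem_filter, mem_univ, true_and] at hf
        rw [Finset.mem_coe, Finset.mem_product]
        simp [Finset.mem_powersetCard_univ, hf.1, hf.2])]
    have hterm : ∀ b ∈ Finset.powersetCard m (Finset.univ : Finset (Fin k)) ×ˢ
        Finset.powersetCard l (Finset.univ : Finset (Fin n)),
        ((Finset.univ.filter
          (fun f : Fin k → Fin n => (matchingSet f).card = m ∧ (repeatedColors f).card = l)).filter
          (fun f => (matchingSet f, repeatedColors f) = b)).card =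
          dsurj m l * (n - l).descFactorial (k - m) := by
      intro b hb
      rw [Finset.mem_product] at hb
      have hb1 : b.1.card = m := Finset.mem_powersetCard_univ.mp hb.1
      have hb2 : b.2.card = l := Finset.mem_powersetCard_univ.mp hb.2
      rw [Finset.filter_filter]
      have : Finset.univ.filter
          (fun f : Fin k → Fin n =>
            ((matchingSet f).card = m ∧ (repeatedColors f).card = l) ∧
              (matchingSet f, repeatedColors f) = b) =
          Finset.univ.filter
            (fun f : Fin k → Fin n => matchingSet f = b.1 ∧ repeatedColors f = b.2) := by
        ext f
        simp only [mem_filter, mem_univ, true_and, Prod.ext_iff]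
        constructor
        · rintro ⟨_, hp⟩; exact hp
        · rintro ⟨hp1, hp2⟩
          exact ⟨⟨by rw [hp1, hb1], by rw [hp2, hb2]⟩, hp1, hp2⟩
      rw [this, card_ML b.1 b.2, hb1, hb2]
    rw [Finset.sum_congr rfl hterm, Finset.sum_const, Finset.card_product,
      Finset.card_powersetCard, Finset.card_powersetCard, Finset.card_univ, Finset.card_univ,
      Fintype.card_fin, Fintype.card_fin, smul_eq_mul]
    ring
  rw [Zeq]
  rcases le_or_gt m k with hm | hm
  · rcases le_or_gt l n with hl | hl
    · have h4 : k - m ≤ n - l := by omega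
      rw [Nat.descFactorial_eq_div h4, show n - l - (k - m) = n - l + m - k from by omega]
    · simp [Nat.choose_eq_zero_of_lt hl]
  · simp [Nat.choose_eq_zero_of_lt hm]
end

section
/- Let n, m be natural numbers with m ≥ 2 and n ≥ 1. If a function f : Fin k → Fin n has exactly m matching positions, then m ≤ k ≤ m + n - 1; moreover, the set of pairs (k, f) where k is a natural number and f : Fin k → Fin n has exactly m matching positions is finite, with cardinality ∑_{k=m}^{m+n-1} ∑_{λ=0}^{min(⌊m/2⌋, n-k+m)} Z(k,n,m,λ). -/
open Finset

lemma mem_matchingSet {k n : ℕ} (f : Fin k → Fin n) (i : Fin k) :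
    i ∈ matchingSet f ↔ ∃ j, j ≠ i ∧ f j = f i := by
  simp [matchingSet]

lemma mem_repeatedColors {k n : ℕ} (f : Fin k → Fin n) (c : Fin n) :
    c ∈ repeatedColors f ↔ 2 ≤ (Finset.univ.filter (fun i => f i = c)).card := by
  simp [repeatedColors]

lemma aux1 {k n : ℕ} (f : Fin k → Fin n) :
    2 * (repeatedColors f).card ≤ (matchingSet f).card := by
  have hdisj : ∀ c ∈ repeatedColors f, ∀ c' ∈ repeatedColors f, c ≠ c' →
      Disjoint (Finset.univ.filter (fun i => f i = c)) (Finset.univ.filter (fun i => f i = c')) := by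
    intro c _ c' _ hne
    simp only [Finset.disjoint_left, Finset.mem_filter, Finset.mem_univ, true_and]
    rintro i rfl h; exact hne h
  have hcard := Finset.card_biUnion hdisj
  have hsub : (repeatedColors f).biUnion (fun c => Finset.univ.filter (fun i => f i = c))
      ⊆ matchingSet f := by
    intro i hi
    simp only [Finset.mem_biUnion, Finset.mem_filter, Finset.mem_univ, true_and] at hi
    obtain ⟨c, hc, hfc⟩ := hi
    rw [mem_repeatedColors] at hc
    rw [mem_matchingSet]
    obtain ⟨j, hj, hji⟩ := Finset.exists_mem_ne hc i
    simp only [Finset.mem_filter, Finset.mem_univ, true_and] at hj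
    exact ⟨j, hji, by rw [hj, hfc]⟩
  calc 2 * (repeatedColors f).card = ∑ _c ∈ repeatedColors f, 2 := by
        rw [Finset.sum_const, smul_eq_mul, mul_comm]
    _ ≤ ∑ c ∈ repeatedColors f, (Finset.univ.filter (fun i => f i = c)).card :=
        Finset.sum_le_sum (fun c hc => (mem_repeatedColors f c).mp hc)
    _ = ((repeatedColors f).biUnion (fun c => Finset.univ.filter (fun i => f i = c))).card :=
        hcard.symm
    _ ≤ (matchingSet f).card := Finset.card_le_card hsub

lemma aux2 {k n : ℕ} (f : Fin k → Fin n) :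
    (repeatedColors f).card + (k - (matchingSet f).card) ≤ n := by
  set M := matchingSet f
  have hinj : Set.InjOn f ↑Mᶜ := by
    intro i hi j hj hij
    by_contra hne
    simp only [Finset.coe_compl, Set.mem_compl_iff, Finset.mem_coe] at hi
    exact hi ((mem_matchingSet f i).mpr ⟨j, fun h => hne h.symm, hij.symm⟩)
  have hdisj : Disjoint (Mᶜ.image f) (repeatedColors f) := by
    simp only [Finset.disjoint_left, Finset.mem_image]
    rintro c ⟨i, hi, rfl⟩ hc
    rw [mem_repeatedColors] at hc
    obtain ⟨j, hj, hji⟩ := Finset.exists_mem_ne hc i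
    simp only [Finset.mem_filter, Finset.mem_univ, true_and] at hj
    simp only [Finset.mem_compl] at hi
    exact hi ((mem_matchingSet f i).mpr ⟨j, hji, hj⟩)
  have h1 : (Mᶜ.image f).card = Mᶜ.card := Finset.card_image_of_injOn hinj
  have h2 : (Mᶜ.image f ∪ repeatedColors f).card ≤ n := by
    have := Finset.card_le_univ (Mᶜ.image f ∪ repeatedColors f)
    simpa using this
  rw [Finset.card_union_of_disjoint hdisj, h1, Finset.card_compl, Fintype.card_fin] at h2
  omega

lemma aux3 {k n : ℕ} (f : Fin k → Fin n) (h : 1 ≤ (matchingSet f).card) :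
    1 ≤ (repeatedColors f).card := by
  obtain ⟨i, hi⟩ := Finset.card_pos.mp h
  rw [mem_matchingSet] at hi
  obtain ⟨j, hji, hfj⟩ := hi
  have : f i ∈ repeatedColors f := by
    rw [mem_repeatedColors]
    have : {j, i} ⊆ Finset.univ.filter (fun x => f x = f i) := by
      intro x hx
      simp only [Finset.mem_insert, Finset.mem_singleton] at hx
      rcases hx with rfl | rfl <;> simp [hfj]
    calc 2 = ({j, i} : Finset (Fin k)).card := by rw [Finset.card_insert_of_notMem (by simpa using hji), Finset.card_singleton]
      _ ≤ _ := Finset.card_le_card this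
  exact Finset.card_pos.mpr ⟨f i, this⟩

/-- for `n ≥ 1` and `m ≥ 2`, any coloring of `k` balls with at most `n`
colors with exactly `m` matching positions satisfies `m ≤ k ≤ m + n - 1`; the set of
all pairs `(k, f)` with exactly `m` matching positions is finite, of cardinality
`∑_{k=m}^{m+n-1} ∑_{l=0}^{min(⌊m/2⌋, n-k+m)} Z(k,n,m,l)`. -/
theorem stmt10 (n m : ℕ) (hn : 1 ≤ n) (hm : 2 ≤ m) :
    (∀ (k : ℕ) (f : Fin k → Fin n), (matchingSet f).card = m → m ≤ k ∧ k ≤ m + n - 1) ∧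
    {p : (k : ℕ) × (Fin k → Fin n) | (matchingSet p.2).card = m}.Finite ∧
    {p : (k : ℕ) × (Fin k → Fin n) | (matchingSet p.2).card = m}.ncard =
      ∑ k ∈ Finset.Icc m (m + n - 1),
        ∑ l ∈ Finset.range (min (m / 2) (n + m - k) + 1), Z k n m l := by
  have hpart1 : ∀ (k : ℕ) (f : Fin k → Fin n), (matchingSet f).card = m →
      m ≤ k ∧ k ≤ m + n - 1 := by
    intro k f hf
    have h1 : (matchingSet f).card ≤ k := by
      simpa using Finset.card_le_univ (matchingSet f)
    have h2 := aux2 f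
    have h3 := aux3 f (by omega)
    omega
  set T : Finset ((k : ℕ) × (Fin k → Fin n)) :=
    (Finset.Icc m (m + n - 1)).sigma
      (fun k => Finset.univ.filter (fun f => (matchingSet f).card = m)) with hT
  have hST : {p : (k : ℕ) × (Fin k → Fin n) | (matchingSet p.2).card = m} = ↑T := by
    ext ⟨k, f⟩
    simp only [Set.mem_setOf_eq, Finset.mem_coe, hT, Finset.mem_sigma, Finset.mem_filter,
      Finset.mem_univ, true_and, Finset.mem_Icc]
    constructor
    · intro h; exact ⟨hpart1 k f h, h⟩
    · intro h; exact h.2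
  refine ⟨hpart1, by rw [hST]; exact T.finite_toSet, ?_⟩
  rw [hST, Set.ncard_coe_finset, hT, Finset.card_sigma]
  refine Finset.sum_congr rfl (fun k hk => ?_)
  rw [Finset.mem_Icc] at hk
  rw [Finset.card_eq_sum_card_fiberwise
    (f := fun f => (repeatedColors f).card)
    (t := Finset.range (min (m / 2) (n + m - k) + 1)) ?_]
  · refine Finset.sum_congr rfl (fun l _ => ?_)
    rw [Z, Fintype.card_subtype, Finset.filter_filter]
  · intro f hf
    simp only [Finset.mem_coe, Finset.mem_filter, Finset.mem_univ, true_and] at hf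
    have h1 := aux1 f
    have h2 := aux2 f
    simp only [Finset.mem_coe, Finset.mem_range]
    omega
end

section
/- Let k, n, μ be natural numbers with μ ≥ 1. The number of functions f : Fin k → Fin n with exactly μ repeat positions equals ∑_{λ=0}^{μ} Z(k,n,μ+λ,λ). -/
open Finset

lemma repeat_subset_matching {k n : ℕ} (f : Fin k → Fin n) :
    repeatSet f ⊆ matchingSet f := by
  intro i hi
  simp only [repeatSet, matchingSet, mem_filter, mem_univ, true_and] at hi ⊢
  obtain ⟨j, hj, hfj⟩ := hi
  exact ⟨j, ne_of_lt hj, hfj⟩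

lemma sdiff_card {k n : ℕ} (f : Fin k → Fin n) :
    ((matchingSet f) \ (repeatSet f)).card = (repeatedColors f).card := by
  apply Finset.card_bij (fun i _ => f i)
  · intro i hi
    simp only [mem_sdiff, matchingSet, repeatSet, mem_filter, mem_univ, true_and] at hi
    obtain ⟨⟨j, hj, hfj⟩, _⟩ := hi
    simp only [repeatedColors, mem_filter, mem_univ, true_and]
    refine Finset.one_lt_card.mpr ⟨j, ?_, i, ?_, hj⟩ <;>
      simp [hfj]
  · intro a ha b hb hab
    simp only [mem_sdiff, matchingSet, repeatSet, mem_filter, mem_univ, true_and] at ha hb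
    by_contra hne
    rcases lt_or_gt_of_ne hne with h | h
    · exact hb.2 ⟨a, h, hab⟩
    · exact ha.2 ⟨b, h, hab.symm⟩
  · intro c hc
    simp only [repeatedColors, mem_filter, mem_univ, true_and] at hc
    have hne : (Finset.univ.filter (fun i => f i = c)).Nonempty :=
      Finset.card_pos.mp (by omega)
    set i := (Finset.univ.filter (fun i => f i = c)).min' hne with hi
    have him : i ∈ Finset.univ.filter (fun i => f i = c) := Finset.min'_mem _ _
    have hfi : f i = c := (mem_filter.mp him).2
    obtain ⟨j, hjm, hji⟩ := Finset.exists_mem_ne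
      (s := Finset.univ.filter (fun i => f i = c)) (by omega) i
    refine ⟨i, ?_, hfi⟩
    simp only [mem_sdiff, matchingSet, repeatSet, mem_filter, mem_univ, true_and]
    constructor
    · exact ⟨j, hji, by rw [(mem_filter.mp hjm).2, hfi]⟩
    · rintro ⟨j', hj', hfj'⟩
      have : i ≤ j' := Finset.min'_le _ _ (by simp [hfj', hfi])
      exact absurd hj' (not_lt.mpr this)

lemma key_card {k n : ℕ} (f : Fin k → Fin n) :
    (matchingSet f).card = (repeatSet f).card + (repeatedColors f).card := by
  rw [← sdiff_card f, add_comm,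
    Finset.card_sdiff_add_card_eq_card (repeat_subset_matching f)]

lemma repeated_le_repeat {k n : ℕ} (f : Fin k → Fin n) :
    (repeatedColors f).card ≤ (repeatSet f).card := by
  apply Finset.card_le_card_of_surjOn f
  intro c hc
  simp only [repeatedColors, coe_filter, Set.mem_setOf_eq, mem_univ, true_and] at hc
  have hne : (Finset.univ.filter (fun i => f i = c)).Nonempty :=
    Finset.card_pos.mp (by omega)
  set i := (Finset.univ.filter (fun i => f i = c)).max' hne with hi
  have him : i ∈ Finset.univ.filter (fun i => f i = c) := Finset.max'_mem _ _
  have hfi : f i = c := (mem_filter.mp him).2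
  obtain ⟨j, hjm, hji⟩ := Finset.exists_mem_ne
    (s := Finset.univ.filter (fun i => f i = c)) (by omega) i
  have hfj : f j = c := (mem_filter.mp hjm).2
  refine ⟨i, ?_, hfi⟩
  simp only [repeatSet, coe_filter, Set.mem_setOf_eq, mem_univ, true_and]
  exact ⟨j, lt_of_le_of_ne (Finset.le_max' _ _ hjm) hji, hfj.trans hfi.symm⟩

/-- for `μ ≥ 1`, the number of colorings of `k` balls with at most `n`
colors having exactly `μ` repeat positions equals `∑_{l=0}^{μ} Z(k,n,μ+l,l)`. -/
theorem stmt14 (k n μ : ℕ) (hμ : 1 ≤ μ) :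
    Fintype.card {f : Fin k → Fin n // (repeatSet f).card = μ} =
      ∑ l ∈ Finset.range (μ + 1), Z k n (μ + l) l := by
  classical
  rw [Fintype.card_subtype]
  rw [Finset.card_eq_sum_card_fiberwise
    (f := fun f : Fin k → Fin n => (repeatedColors f).card) (t := Finset.range (μ + 1))
    (by
      intro f hf
      simp only [coe_filter, Set.mem_setOf_eq, mem_univ, true_and] at hf
      have := repeated_le_repeat f
      simp only [coe_range, Set.mem_Iio]
      omega)]
  refine Finset.sum_congr rfl fun l hl => ?_
  rw [Z, Fintype.card_subtype]
  congr 1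
  ext f
  simp only [Finset.filter_filter, mem_filter, mem_univ, true_and]
  have hk := key_card f
  constructor
  · rintro ⟨h1, h2⟩
    exact ⟨by omega, h2⟩
  · rintro ⟨h1, h2⟩
    exact ⟨by omega, h2⟩
end
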